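/- Let P be a real symmetric positive definite n×n matrix, Ω a real symmetric n×n matrix, λ ∈ (0,1), N = λ·I + Ω P Ω, and P' = (1/λ)·(P − P Ω N⁻¹ Ω P). Then the corresponding information matrices R = P⁻¹ and R' = P'⁻¹ satisfy the exponential-forgetting recursion R' = λ·R + Ω². -/

import Mathlib

open Matrix

/-- With `N = λ I + Ω P Ω` and `P' = (1/λ)(P − P Ω N⁻¹ Ω P)`, the information matrices
`R = P⁻¹` and `R' = P'⁻¹` satisfy the exponential-forgetting recursion `R' = λ R + Ω²`. -/
theorem information_matrix_recursion {n : ℕ} (P Ω : Matrix (Fin n) (Fin n) ℝ)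
    (hP : P.PosDef) (hΩ : Ω.IsHermitian) (lam : ℝ) (hlam0 : 0 < lam) (hlam1 : lam < 1)
    (N P' : Matrix (Fin n) (Fin n) ℝ)
    (hN : N = lam • (1 : Matrix (Fin n) (Fin n) ℝ) + Ω * P * Ω)
    (hP' : P' = lam⁻¹ • (P - P * Ω * N⁻¹ * Ω * P)) :
    P'⁻¹ = lam • P⁻¹ + Ω * Ω := by
  have hlam : lam ≠ 0 := ne_of_gt hlam0
  -- lam • 1 is positive definite
  have hL : (lam • (1 : Matrix (Fin n) (Fin n) ℝ)).PosDef := by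
    constructor
    · simp [Matrix.IsHermitian]
    · intro x hx
      exact (Matrix.PosDef.one.smul hlam0).2 hx
  have hΩPΩ : (Ω * P * Ω).PosSemidef := by
    have := hP.posSemidef.mul_mul_conjTranspose_same Ω
    rwa [hΩ.eq] at this
  have hNpd : N.PosDef := by rw [hN]; exact hL.add_posSemidef hΩPΩ
  have hNinv : N⁻¹ * N = 1 := nonsing_inv_mul N (isUnit_iff_ne_zero.mpr hNpd.det_pos.ne')
  have hPinv : P * P⁻¹ = 1 := mul_nonsing_inv P (isUnit_iff_ne_zero.mpr hP.det_pos.ne')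
  -- key algebraic identity
  have key : (P - P * Ω * N⁻¹ * Ω * P) * (lam • P⁻¹ + Ω * Ω) =
      lam • (1 : Matrix (Fin n) (Fin n) ℝ) := by
    have h1 : P * Ω * Ω = lam • (P * Ω * N⁻¹ * Ω) + P * Ω * N⁻¹ * Ω * P * (Ω * Ω) := by
      calc P * Ω * Ω = P * Ω * (N⁻¹ * N) * Ω := by rw [hNinv, mul_one]
        _ = P * Ω * N⁻¹ * (N * Ω) := by noncomm_ring
        _ = P * Ω * N⁻¹ * (lam • Ω + Ω * P * Ω * Ω) := by
              rw [hN, add_mul, smul_mul_assoc, one_mul]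
        _ = lam • (P * Ω * N⁻¹ * Ω) + P * Ω * N⁻¹ * Ω * P * (Ω * Ω) := by
              rw [mul_add, mul_smul_comm]; noncomm_ring
    have h2 : P * Ω * N⁻¹ * Ω * P * P⁻¹ = P * Ω * N⁻¹ * Ω := by
      rw [mul_assoc, mul_assoc, mul_assoc, mul_assoc]
      rw [show P * P⁻¹ = 1 from hPinv]
      noncomm_ring
    calc (P - P * Ω * N⁻¹ * Ω * P) * (lam • P⁻¹ + Ω * Ω)
        = lam • (P * P⁻¹) + P * Ω * Ω
          - (lam • (P * Ω * N⁻¹ * Ω * P * P⁻¹) + P * Ω * N⁻¹ * Ω * P * (Ω * Ω)) := by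
          simp only [sub_mul, mul_add, mul_smul_comm, mul_assoc]; module
      _ = lam • (1 : Matrix (Fin n) (Fin n) ℝ) := by
          rw [hPinv, h1, h2]; abel
  have hfinal : P' * (lam • P⁻¹ + Ω * Ω) = 1 := by
    rw [hP', smul_mul_assoc, key, smul_smul, inv_mul_cancel₀ hlam, one_smul]
  exact inv_eq_right_inv hfinal
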